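/- In the Colonel Blotto game with favoritism, if battlefield i satisfies p_i < 0 and w_i·κ_A > q_i·w_i·κ_B − p_i for some κ_A, κ_B > 0, and Player A's allocation A_i is uniform on [−p_i, q_i·w_i·κ_B − p_i] while Player B's allocation B_i has CDF G(x) = 1 − q_i κ_B/κ_A + q_i x/(w_i κ_A) on [0, w_i κ_B] (G = 1 beyond), with A_i, B_i independent, then Player A's expected gain w_i·P(A_i > q_i·B_i − p_i) equals w_i − q_i·κ_B·w_i/(2·κ_A). -/

import Mathlib

open MeasureTheory ProbabilityTheory Set
open scoped ProbabilityTheory ENNReal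

/-- Battlefield `i` with `p_i < 0` and `w_i·κ_A > q_i·w_i·κ_B − p_i`: if `A_i` is uniform on
`[−p, q·w·κ_B − p]` and `B_i` follows the stated distribution, independently, then Player A's
expected gain is `w − q·κ_B·w/(2·κ_A)`. -/
theorem stmt_16 {Ω : Type*} [MeasureSpace Ω] [IsProbabilityMeasure (ℙ : Measure Ω)]
    (w p q κA κB : ℝ) (hw : 0 < w) (hq : 0 < q) (hκA : 0 < κA) (hκB : 0 < κB)
    (hp : p < 0) (hcase : q * w * κB - p < w * κA)
    (A B : Ω → ℝ) (hAmeas : Measurable A) (hBmeas : Measurable B)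
    (hindep : IndepFun A B ℙ)
    (hAcdf : ∀ x : ℝ, ℙ {ω | A ω ≤ x} = ENNReal.ofReal
      (min (max ((x + p) / (q * w * κB)) 0) 1))
    (hBcdf : ∀ x : ℝ, ℙ {ω | B ω ≤ x} = ENNReal.ofReal
      (if x < 0 then 0
       else if x ≤ w * κB then 1 - q * κB / κA + q * x / (w * κA)
       else 1)) :
    w * (ℙ {ω | q * B ω - p < A ω}).toReal = w - q * κB * w / (2 * κA) := by
  set L : ℝ := q * w * κB with hL
  have hLpos : 0 < L := by positivity
  set M : ℝ := w * κB with hM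
  have hMpos : 0 < M := by positivity
  set α : ℝ := 1 - q * κB / κA with hα
  have hαpos : 0 < α := by
    rw [hα, sub_pos, div_lt_one hκA]; nlinarith
  set νA : Measure ℝ := (ENNReal.ofReal L⁻¹) • (volume.restrict (Icc (-p) (L - p))) with hνA
  set νB : Measure ℝ := (ENNReal.ofReal α) • Measure.dirac 0
      + (ENNReal.ofReal (q / (w * κA))) • (volume.restrict (Icc 0 M)) with hνB
  haveI hPA : IsProbabilityMeasure (Measure.map A ℙ) :=
    Measure.isProbabilityMeasure_map hAmeas.aemeasurable
  haveI hPB : IsProbabilityMeasure (Measure.map B ℙ) :=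
    Measure.isProbabilityMeasure_map hBmeas.aemeasurable
  -- law of A
  have hmapA : Measure.map A ℙ = νA := by
    refine Measure.ext_of_Iic _ _ (fun x => ?_)
    rw [Measure.map_apply hAmeas measurableSet_Iic]
    have h1 : A ⁻¹' (Iic x) = {ω | A ω ≤ x} := rfl
    rw [h1, hAcdf x, hνA, Measure.smul_apply, Measure.restrict_apply measurableSet_Iic]
    have h2 : Iic x ∩ Icc (-p) (L - p) = Icc (-p) (min (L - p) x) := by
      ext y; simp only [mem_inter_iff, mem_Iic, mem_Icc, le_min_iff]; tauto
    rw [h2, Real.volume_Icc, smul_eq_mul, ← ENNReal.ofReal_mul (by positivity)]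
    rcases le_or_gt x (-p) with hx | hx
    · have h3 : min (L - p) x = x := min_eq_right (by nlinarith)
      have h4 : max ((x + p) / L) 0 = 0 :=
        max_eq_right (div_nonpos_of_nonpos_of_nonneg (by linarith) hLpos.le)
      have h5 : L⁻¹ * (x - -p) ≤ 0 :=
        mul_nonpos_of_nonneg_of_nonpos (inv_nonneg.mpr hLpos.le) (by linarith)
      rw [h3, h4, min_eq_left zero_le_one, ENNReal.ofReal_zero, eq_comm,
        ENNReal.ofReal_eq_zero]
      exact h5
    · rcases le_or_gt x (L - p) with hx2 | hx2
      · have h3 : min (L - p) x = x := min_eq_right hx2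
        have h4 : max ((x + p) / L) 0 = (x + p) / L :=
          max_eq_left (div_nonneg (by linarith) hLpos.le)
        have h5 : min ((x + p) / L) 1 = (x + p) / L :=
          min_eq_left (by rw [div_le_one hLpos]; linarith)
        rw [h3, h4, h5]; congr 1; field_simp; ring
      · have h3 : min (L - p) x = L - p := min_eq_left hx2.le
        have h4 : max ((x + p) / L) 0 = (x + p) / L :=
          max_eq_left (div_nonneg (by linarith) hLpos.le)
        have h5 : min ((x + p) / L) 1 = 1 :=
          min_eq_right (by rw [le_div_iff₀ hLpos]; linarith)
        rw [h3, h4, h5]; congr 1; field_simp; ring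
  -- law of B
  have hmapB : Measure.map B ℙ = νB := by
    refine Measure.ext_of_Iic _ _ (fun x => ?_)
    rw [Measure.map_apply hBmeas measurableSet_Iic]
    have h1 : B ⁻¹' (Iic x) = {ω | B ω ≤ x} := rfl
    rw [h1, hBcdf x, hνB, Measure.add_apply, Measure.smul_apply, Measure.smul_apply,
      Measure.restrict_apply measurableSet_Iic,
      Measure.dirac_apply' 0 measurableSet_Iic]
    have h2 : Iic x ∩ Icc 0 M = Icc 0 (min M x) := by
      ext y; simp only [mem_inter_iff, mem_Iic, mem_Icc, le_min_iff]; tauto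
    rw [h2, Real.volume_Icc]
    rcases lt_or_ge x 0 with hx | hx
    · rw [if_pos hx, indicator_of_notMem (by simpa using hx.not_ge)]
      have h3 : min M x - 0 = x := by rw [min_eq_right (by linarith)]; ring
      rw [h3, ENNReal.ofReal_eq_zero.mpr hx.le]
      simp
    · rw [if_neg (not_lt.mpr hx), indicator_of_mem (by simpa using hx) (1 : ℝ → ℝ≥0∞)]
      rcases le_or_gt x M with hx2 | hx2
      · rw [if_pos hx2, min_eq_right hx2, sub_zero, Pi.one_apply, smul_eq_mul, mul_one,
          smul_eq_mul, ← ENNReal.ofReal_mul (by positivity),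
          ← ENNReal.ofReal_add hαpos.le (by positivity)]
        congr 1; ring
      · rw [if_neg (not_le.mpr hx2), min_eq_left hx2.le, sub_zero, Pi.one_apply, smul_eq_mul,
          mul_one, smul_eq_mul, ← ENNReal.ofReal_mul (by positivity),
          ← ENNReal.ofReal_add hαpos.le (by positivity)]
        congr 1; rw [hα, hM]; field_simp; ring
  -- product structure
  set S : Set (ℝ × ℝ) := {x | q * x.2 - p < x.1} with hS
  have hSmeas : MeasurableSet S :=
    measurableSet_lt ((measurable_snd.const_mul q).sub measurable_const) measurable_fst
  have hpre : {ω | q * B ω - p < A ω} = (fun ω => (A ω, B ω)) ⁻¹' S := rfl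
  have hprod : Measure.map (fun ω => (A ω, B ω)) ℙ = νA.prod νB := by
    rw [(indepFun_iff_map_prod_eq_prod_map_map hAmeas.aemeasurable
      hBmeas.aemeasurable).mp hindep, hmapA, hmapB]
  have hmeasP : ℙ {ω | q * B ω - p < A ω} = (νA.prod νB) S := by
    rw [hpre, ← Measure.map_apply (hAmeas.prodMk hBmeas) hSmeas, hprod]
  -- compute the product measure of S
  have hslice : ∀ a : ℝ, Prod.mk a ⁻¹' S = Iio ((a + p) / q) := by
    intro a; ext b
    simp only [hS, mem_preimage, mem_setOf_eq, mem_Iio, lt_div_iff₀ hq]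
    constructor <;> intro h <;> nlinarith
  have hνBIio : ∀ t : ℝ, 0 < t → t ≤ M →
      νB (Iio t) = ENNReal.ofReal (α + q / (w * κA) * t) := by
    intro t ht htM
    rw [hνB, Measure.add_apply, Measure.smul_apply, Measure.smul_apply,
      Measure.restrict_apply measurableSet_Iio,
      Measure.dirac_apply' 0 measurableSet_Iio,
      indicator_of_mem (by simpa using ht) (1 : ℝ → ℝ≥0∞)]
    have h2 : Iio t ∩ Icc 0 M = Ico 0 t := by
      ext b; simp only [mem_inter_iff, mem_Iio, mem_Icc, mem_Ico]
      exact ⟨fun ⟨h1, h2, _⟩ => ⟨h2, h1⟩, fun ⟨h1, h2⟩ => ⟨h2, h1, h2.le.trans htM⟩⟩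
    rw [h2, Real.volume_Ico, sub_zero, Pi.one_apply, smul_eq_mul, mul_one, smul_eq_mul,
      ← ENNReal.ofReal_mul (by positivity),
      ← ENNReal.ofReal_add hαpos.le (mul_nonneg (by positivity) ht.le)]
  have hres : volume.restrict (Icc (-p) (L - p)) = volume.restrict (Ioc (-p) (L - p)) :=
    (Measure.restrict_congr_set Ioc_ae_eq_Icc).symm
  have hval : (νA.prod νB) S = ENNReal.ofReal (α + q * κB / (2 * κA)) := by
    rw [Measure.prod_apply hSmeas, hνA, hres, lintegral_smul_measure]
    have hcong : ∀ a ∈ Ioc (-p) (L - p),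
        νB (Prod.mk a ⁻¹' S) = ENNReal.ofReal (α + (a + p) / (w * κA)) := by
      intro a ha
      rcases ha with ⟨h1, h2⟩
      rw [hslice a, hνBIio ((a + p) / q) (div_pos (by linarith) hq)
        (by rw [div_le_iff₀ hq, hM]; nlinarith)]
      congr 1; field_simp
    rw [setLIntegral_congr_fun measurableSet_Ioc hcong]
    have hint : IntegrableOn (fun a => α + (a + p) / (w * κA)) (Ioc (-p) (L - p)) :=
      (continuous_const.add ((continuous_id'.add continuous_const).div_const _)).integrableOn_Ioc
    have hnn : 0 ≤ᵐ[volume.restrict (Ioc (-p) (L - p))] (fun a => α + (a + p) / (w * κA)) :=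
      (ae_restrict_iff' measurableSet_Ioc).mpr (ae_of_all _ (fun a ha => by
        rcases ha with ⟨h1, _⟩
        simp only [Pi.zero_apply]
        exact add_nonneg hαpos.le (div_nonneg (by linarith) (by positivity))))
    rw [← ofReal_integral_eq_lintegral_ofReal hint hnn, smul_eq_mul,
      ← ENNReal.ofReal_mul (inv_nonneg.mpr hLpos.le)]
    congr 1
    rw [← intervalIntegral.integral_of_le (by nlinarith : -p ≤ L - p)]
    have heq : (∫ a in (-p)..(L - p), (α + (a + p) / (w * κA))) =
        ∫ a in (-p)..(L - p), ((α + p / (w * κA)) + (w * κA)⁻¹ * a) := by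
      congr 1; funext a; field_simp; ring
    rw [heq, intervalIntegral.integral_add (intervalIntegrable_const)
      ((intervalIntegral.intervalIntegrable_id).const_mul _),
      intervalIntegral.integral_const, intervalIntegral.integral_const_mul,
      integral_id, smul_eq_mul]
    rw [hα, hL]
    field_simp
    ring
  rw [hmeasP, hval, ENNReal.toReal_ofReal (add_nonneg hαpos.le (by positivity)), hα]
  field_simp
  ring
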